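/- For every integer n ≥ 3 with n ≡ 0 (mod 4), the cycle C_n admits an improper twin 2-edge coloring, while for every m ≥ 3 with m ≡ 2 (mod 4), the path P_m admits no improper twin 2-edge coloring (so χ'_it(C_n) = 2 < 3 = χ'_it(P_m), showing χ'_it is not monotone under subgraphs). -/

import Mathlib

open Finset

-- The vertex label induced by an edge coloring: `twinLabel G s v = Σ_{e ∈ E_v} s e` in `ZMod k`.
open scoped Classical in
noncomputable def twinLabel {V : Type*} [Fintype V] (G : SimpleGraph V) {k : ℕ}
    (s : Sym2 V → ZMod k) (v : V) : ZMod k :=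
  ∑ e ∈ G.incidenceFinset v, s e

/-- `s` is an improper twin `k`-edge coloring of `G`: the induced vertex labeling
is a proper vertex coloring. -/
def IsImproperTwin {V : Type*} [Fintype V] (G : SimpleGraph V) (k : ℕ)
    (s : Sym2 V → ZMod k) : Prop :=
  ∀ ⦃u v : V⦄, G.Adj u v → twinLabel G s u ≠ twinLabel G s v

/-- The improper twin chromatic index: the least `k ≥ 2` admitting an improper twin
`k`-edge coloring. -/
noncomputable def improperTwinIndex {V : Type*} [Fintype V] (G : SimpleGraph V) : ℕ :=
  sInf {k | 2 ≤ k ∧ ∃ s : Sym2 V → ZMod k, IsImproperTwin G k s}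

open scoped Classical in
lemma twinLabel_eq_sum_neighbors {V : Type*} [Fintype V] (G : SimpleGraph V) {k : ℕ}
    (s : Sym2 V → ZMod k) (v : V) :
    twinLabel G s v = ∑ w ∈ G.neighborFinset v, s s(v, w) := by
  have himg : G.incidenceFinset v = (G.neighborFinset v).image (fun w => s(v, w)) := by
    ext e
    simp only [SimpleGraph.mem_incidenceFinset, Finset.mem_image,
      SimpleGraph.mem_neighborFinset]
    constructor
    · rintro ⟨he, hv⟩
      obtain ⟨w, rfl⟩ := Sym2.mem_iff_exists.mp hv
      exact ⟨w, G.mem_edgeSet.mp he, rfl⟩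
    · rintro ⟨w, hw, rfl⟩
      exact ⟨G.mem_edgeSet.mpr hw, Sym2.mem_mk_left v w⟩
  rw [twinLabel, himg, Finset.sum_image]
  intro a ha b hb h
  rw [Finset.mem_coe, SimpleGraph.mem_neighborFinset] at ha hb
  rcases Sym2.eq_iff.mp h with ⟨_, h2⟩ | ⟨h1, h2⟩
  · exact h2
  · exact absurd h2.symm ha.ne

open scoped Classical in
lemma sum_twinLabel_eq_zero {V : Type*} [Fintype V] (G : SimpleGraph V)
    (s : Sym2 V → ZMod 2) : ∑ v, twinLabel G s v = 0 := by
  classical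
  have h1 : ∀ v, twinLabel G s v
      = ∑ w ∈ Finset.univ, if G.Adj v w then s s(v, w) else 0 := by
    intro v
    rw [twinLabel_eq_sum_neighbors, SimpleGraph.neighborFinset_eq_filter, Finset.sum_filter]
  calc ∑ v, twinLabel G s v
      = ∑ p ∈ Finset.univ ×ˢ Finset.univ,
          (if G.Adj p.1 p.2 then s s(p.1, p.2) else 0) := by
        rw [Finset.sum_product]; simp only [h1]
    _ = 0 := by
        have key : ∀ p : V × V,
            (if G.Adj p.2 p.1 then s s(p.2, p.1) else 0)
              = (if G.Adj p.1 p.2 then s s(p.1, p.2) else 0) := by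
          intro p
          by_cases h : G.Adj p.1 p.2
          · rw [if_pos h, if_pos h.symm, Sym2.eq_swap]
          · rw [if_neg h, if_neg (fun hh => h hh.symm)]
        apply Finset.sum_involution (fun p _ => Prod.swap p)
        · intro p _
          show _ + (if G.Adj p.2 p.1 then s s(p.2, p.1) else 0) = 0
          rw [key p, CharTwo.add_self_eq_zero]
        · intro p _ hf
          have hadj : G.Adj p.1 p.2 := by
            by_contra h; exact hf (if_neg h)
          intro hsw
          obtain ⟨a, b⟩ := p
          simp only [Prod.swap_prod_mk, Prod.mk.injEq] at hsw
          exact hadj.ne hsw.2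
        · intro p _; exact Finset.mem_product.mpr ⟨Finset.mem_univ _, Finset.mem_univ _⟩
        · intro p _; rfl

lemma ne_zmod2 {a b : ZMod 2} (h : a ≠ b) : a + b = 1 := by
  revert h; revert a b; decide

lemma pair_sum (g : ℕ → ZMod 2) : ∀ k : ℕ, (∀ j, j < k → g (2*j) + g (2*j+1) = 1) →
    ∑ i ∈ Finset.range (2*k), g i = (k : ZMod 2) := by
  intro k
  induction k with
  | zero => intro _; simp
  | succ k ih =>
    intro h
    have h2 : 2 * (k+1) = (2*k + 1) + 1 := by ring
    rw [h2, Finset.sum_range_succ, Finset.sum_range_succ,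
      ih (fun j hj => h j (Nat.lt_succ_of_lt hj)), add_assoc, h k (Nat.lt_succ_self k)]
    push_cast; ring

/-- Edge labels for the cycle coloring: value of the edge `{i, i+1}`. -/
def cycT (n : ℕ) (i : Fin n) : ZMod 2 := if i.val % 4 = 1 ∨ i.val % 4 = 2 then 1 else 0

/-- The improper twin 2-edge coloring of the cycle `C_{N+2}`. -/
def cycCol (N : ℕ) : Sym2 (Fin (N+2)) → ZMod 2 :=
  Sym2.lift ⟨fun a b =>
    (if a + 1 = b then cycT (N+2) a else 0) + (if b + 1 = a then cycT (N+2) b else 0),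
    fun a b => add_comm _ _⟩

open Fin.CommRing in
lemma cycLabel (N : ℕ) (hN : 1 ≤ N) (v : Fin (N+2)) :
    twinLabel (SimpleGraph.cycleGraph (N+2)) (cycCol N) v
      = cycT (N+2) (v - 1) + cycT (N+2) v := by
  have h20 : (2 : Fin (N+2)) ≠ 0 := by
    intro h
    have h2 : ((2 : Fin (N+2)) : ℕ) = 2 % (N+2) := rfl
    have h3 : ((0 : Fin (N+2)) : ℕ) = 0 := rfl
    rw [h, h3, Nat.mod_eq_of_lt (by omega)] at h2
    omega
  have hne : v - 1 ≠ v + 1 := by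
    intro h
    apply h20
    have h2 : v + 1 - (v - 1) = 2 := by ring
    rw [← h2, ← h]; ring
  rw [twinLabel_eq_sum_neighbors]
  refine (Finset.sum_congr (s₂ := {v - 1, v + 1}) ?_ (fun _ _ => rfl)).trans ?_
  · ext w
    rw [SimpleGraph.mem_neighborFinset]
    simp only [Finset.mem_insert, Finset.mem_singleton, SimpleGraph.cycleGraph_adj]
    constructor
    · rintro (h | h)
      · left
        have hh : v = 1 + w := sub_eq_iff_eq_add.mp h
        rw [hh]; ring
      · right
        have hh : w = 1 + v := sub_eq_iff_eq_add.mp h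
        rw [hh]; ring
    · rintro (rfl | rfl)
      · left; ring
      · right; ring
  · rw [Finset.sum_pair hne]
    have e1 : v + 1 ≠ v - 1 := fun h => hne h.symm
    have c1 : (v - 1) + 1 = v := by ring
    have c2 : ¬ (v + 1 + 1 = v) := by
      intro h; apply h20
      have h2 : v + 1 + 1 - v = 2 := by ring
      rw [← h2, h]; ring
    simp only [cycCol, Sym2.lift_mk]
    rw [if_neg e1, if_pos c1, if_neg c2]
    simp [add_comm]

theorem stmt_19 :
    (∀ n : ℕ, 3 ≤ n → n % 4 = 0 →
      ∃ s : Sym2 (Fin n) → ZMod 2,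
        IsImproperTwin (SimpleGraph.cycleGraph n) 2 s) ∧
    (∀ m : ℕ, 3 ≤ m → m % 4 = 2 →
      ¬ ∃ s : Sym2 (Fin m) → ZMod 2,
        IsImproperTwin (SimpleGraph.pathGraph m) 2 s) := by
  constructor
  · -- cycles, n ≡ 0 (mod 4)
    intro n hn3 hn4
    obtain ⟨N, rfl⟩ : ∃ N, n = N + 2 := ⟨n - 2, by omega⟩
    have hN : 1 ≤ N := by omega
    refine ⟨cycCol N, ?_⟩
    intro u v huv
    rw [SimpleGraph.cycleGraph_adj] at huv
    have main : ∀ w : Fin (N+2),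
        cycT (N+2) (w - 1) + cycT (N+2) w ≠ cycT (N+2) w + cycT (N+2) (w + 1) := by
      intro w
      have ha : (w - 1).val % 4 = (w.val + 3) % 4 := by
        rw [Fin.sub_def]
        simp only [Fin.val_one]
        rw [Nat.mod_mod_of_dvd _ (by omega : 4 ∣ (N+2))]
        omega
      have hb : (w + 1).val % 4 = (w.val + 1) % 4 := by
        rw [Fin.add_def]
        simp only [Fin.val_one]
        rw [Nat.mod_mod_of_dvd _ (by omega : 4 ∣ (N+2))]
      intro h
      have h' : cycT (N+2) (w - 1) = cycT (N+2) (w + 1) := by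
        have hh : cycT (N+2) (w - 1) + cycT (N+2) w
            = cycT (N+2) (w + 1) + cycT (N+2) w := by rw [h]; ring
        exact add_right_cancel hh
      unfold cycT at h'
      by_cases hP : ((w - 1).val % 4 = 1 ∨ (w - 1).val % 4 = 2) <;>
        by_cases hQ : ((w + 1).val % 4 = 1 ∨ (w + 1).val % 4 = 2)
      · omega
      · rw [if_pos hP, if_neg hQ] at h'; exact one_ne_zero h'
      · rw [if_neg hP, if_pos hQ] at h'; exact zero_ne_one h'
      · omega
    have step : ∀ w : Fin (N+2),
        twinLabel (SimpleGraph.cycleGraph (N+2)) (cycCol N) (w + 1)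
          ≠ twinLabel (SimpleGraph.cycleGraph (N+2)) (cycCol N) w := by
      intro w
      rw [cycLabel N hN, cycLabel N hN]
      have hvv : w + 1 - 1 = w := by abel
      rw [hvv]
      exact fun hc => main w hc.symm
    rcases huv with h | h
    · have hu : u = v + 1 := by
        rw [sub_eq_iff_eq_add] at h
        rw [h]; open Fin.CommRing in ring
      rw [hu]
      exact step v
    · have hv : v = u + 1 := by
        rw [sub_eq_iff_eq_add] at h
        rw [h]; open Fin.CommRing in ring
      rw [hv]
      exact (step u).symm
  · -- paths, m ≡ 2 (mod 4)
    rintro m hm3 hm4 ⟨s, hs⟩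
    have hm0 : 0 < m := by omega
    set ℓ : Fin m → ZMod 2 := twinLabel (SimpleGraph.pathGraph m) s with hℓ
    have hsum : ∑ v, ℓ v = 0 := sum_twinLabel_eq_zero _ s
    set g : ℕ → ZMod 2 := fun i => if h : i < m then ℓ ⟨i, h⟩ else 0 with hg
    obtain ⟨K, hK⟩ : ∃ K, m = 2 * K := ⟨m / 2, by omega⟩
    have hpair : ∀ j, j < K → g (2*j) + g (2*j+1) = 1 := by
      intro j hj
      have h1 : 2*j < m := by omega
      have h2 : 2*j+1 < m := by omega
      rw [hg]
      simp only [dif_pos h1, dif_pos h2]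
      apply ne_zmod2
      apply hs
      rw [SimpleGraph.pathGraph_adj]
      left; rfl
    have hgsum : ∑ i ∈ Finset.range m, g i = (K : ZMod 2) := by
      rw [hK]; exact pair_sum g K hpair
    have hconv : ∑ v, ℓ v = ∑ i ∈ Finset.range m, g i := by
      rw [← Fin.sum_univ_eq_sum_range]
      apply Finset.sum_congr rfl
      intro i _
      rw [hg]
      simp only [dif_pos i.isLt]
    have hKone : (K : ZMod 2) = 1 := by
      have hK1 : K % 2 = 1 := by omega
      rw [← ZMod.natCast_mod K 2, hK1, Nat.cast_one]
    rw [hconv, hgsum, hKone] at hsum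
    exact one_ne_zero hsum
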